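/- For N = 2, identifiability requires range(C^(1)) ∩ range(C^(2)) = {0}: if X^(n) = [M, C^(n)] S^(n)T (n = 1,2) with [M, C^(n)] and S^(n) of full column rank and range(X^(1)) ∩ range(X^(2)) = range(M), then range(C^(1)) ∩ range(C^(2)) = {0}. -/

import Mathlib

lemma surj_transpose_of_inj {𝔽 : Type*} [Field 𝔽] {m n : Type*} [Fintype m] [Fintype n]
    [DecidableEq m] [DecidableEq n] (A : Matrix m n 𝔽)
    (h : Function.Injective A.mulVecLin) : Function.Surjective A.transpose.mulVecLin := by
  rw [← LinearMap.range_eq_top]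
  apply Submodule.eq_top_of_finrank_eq
  have h1 : A.transpose.rank = A.rank := A.rank_transpose
  have h2 : A.rank = Fintype.card n := by
    rw [Matrix.rank, LinearMap.finrank_range_of_inj h, Module.finrank_pi]
  rw [show A.transpose.rank = Module.finrank 𝔽 (LinearMap.range A.transpose.mulVecLin) from rfl]
    at h1
  rw [h1, h2, Module.finrank_pi]


/-- Two-view necessity: if `X⁽ⁿ⁾ = [M, C⁽ⁿ⁾] S⁽ⁿ⁾ᵀ` for `n = 1, 2`, where `M` has full
column rank, `[M, C⁽ⁿ⁾]` and `S⁽ⁿ⁾` have full column rank, and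
`range(X⁽¹⁾) ∩ range(X⁽²⁾) = range(M)`, then `range(C⁽¹⁾) ∩ range(C⁽²⁾) = {0}`. -/
theorem stmt_15 {𝔽 : Type*} [Field 𝔽] {I R L₁ L₂ K₁ K₂ : ℕ}
    (M : Matrix (Fin I) (Fin R) 𝔽)
    (C₁ : Matrix (Fin I) (Fin L₁) 𝔽) (C₂ : Matrix (Fin I) (Fin L₂) 𝔽)
    (S₁ : Matrix (Fin K₁) (Fin R ⊕ Fin L₁) 𝔽) (S₂ : Matrix (Fin K₂) (Fin R ⊕ Fin L₂) 𝔽)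
    (X₁ : Matrix (Fin I) (Fin K₁) 𝔽) (X₂ : Matrix (Fin I) (Fin K₂) 𝔽)
    (hX₁ : X₁ = Matrix.fromCols M C₁ * S₁.transpose)
    (hX₂ : X₂ = Matrix.fromCols M C₂ * S₂.transpose)
    (hM : Function.Injective M.mulVecLin)
    (hMC₁ : Function.Injective (Matrix.fromCols M C₁).mulVecLin)
    (hMC₂ : Function.Injective (Matrix.fromCols M C₂).mulVecLin)
    (hS₁ : Function.Injective S₁.mulVecLin)
    (hS₂ : Function.Injective S₂.mulVecLin)
    (hid : LinearMap.range X₁.mulVecLin ⊓ LinearMap.range X₂.mulVecLin =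
      LinearMap.range M.mulVecLin) :
    LinearMap.range C₁.mulVecLin ⊓ LinearMap.range C₂.mulVecLin = ⊥ := by
  rw [eq_bot_iff]
  rintro x ⟨⟨u, hu⟩, ⟨v, hv⟩⟩
  -- x ∈ range X₁
  have key : ∀ {L K : ℕ} (C : Matrix (Fin I) (Fin L) 𝔽) (S : Matrix (Fin K) (Fin R ⊕ Fin L) 𝔽)
      (X : Matrix (Fin I) (Fin K) 𝔽) (hX : X = Matrix.fromCols M C * S.transpose)
      (hS : Function.Injective S.mulVecLin) (w : Fin L → 𝔽) (hw : C.mulVec w = x),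
      x ∈ LinearMap.range X.mulVecLin := by
    intro L K C S X hX hS w hw
    obtain ⟨s, hs⟩ := surj_transpose_of_inj S hS (Sum.elim (0 : Fin R → 𝔽) w)
    refine ⟨s, ?_⟩
    simp only [Matrix.mulVecLin_apply] at hs ⊢
    rw [hX, ← Matrix.mulVec_mulVec, hs, Matrix.fromCols_mulVec_sumElim,
      Matrix.mulVec_zero, zero_add, hw]
  have hx1 : x ∈ LinearMap.range X₁.mulVecLin := key C₁ S₁ X₁ hX₁ hS₁ u hu
  have hx2 : x ∈ LinearMap.range X₂.mulVecLin := key C₂ S₂ X₂ hX₂ hS₂ v hv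
  have hxM : x ∈ LinearMap.range M.mulVecLin := by
    rw [← hid]; exact ⟨hx1, hx2⟩
  obtain ⟨w, hw⟩ := hxM
  have hzero : (Matrix.fromCols M C₁).mulVecLin (Sum.elim w (-u)) = 0 := by
    simp only [Matrix.mulVecLin_apply, Matrix.fromCols_mulVec_sumElim]
    rw [Matrix.mulVec_neg]
    simp only [Matrix.mulVecLin_apply] at hw hu
    rw [hw, hu]
    abel
  have := hMC₁ (by rw [hzero, map_zero] : (Matrix.fromCols M C₁).mulVecLin
    (Sum.elim w (-u)) = (Matrix.fromCols M C₁).mulVecLin 0)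
  have hu0 : u = 0 := by
    funext i
    have := congrFun this (Sum.inr i)
    simpa using this
  simp only [Matrix.mulVecLin_apply] at hu
  rw [hu0, Matrix.mulVec_zero] at hu
  simp [← hu]
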